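/- Let n ≥ 6 be even and let L be an order-n Latin square with inner distance n/2 − 1. If there exists an index 0 ≤ i ≤ n−2 such that rows i and i+1 have the same difference row (i.e. L(i, j+1) − L(i, j) = L(i+1, j+1) − L(i+1, j) for all 0 ≤ j ≤ n−2), then L is a row product (all rows of L have the same difference row). -/
import Mathlib


/-- Distance between two symbols of `ZMod n`: the minimum of the two cyclic differences. -/
def zdist {n : ℕ} (a b : ZMod n) : ℕ := min (a - b).val (b - a).val

/-- An order-`n` Latin square: every row and every column is injective. -/
def IsLatin (n : ℕ) (L : Fin n → Fin n → ZMod n) : Prop :=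
  (∀ i, Function.Injective (L i)) ∧ ∀ j, Function.Injective fun i => L i j

/-- The inner distance of a square: the minimum of `zdist` over all pairs of
horizontally or vertically adjacent cells. -/
noncomputable def innerDist (n : ℕ) (L : Fin n → Fin n → ZMod n) : ℕ :=
  sInf { d : ℕ |
    (∃ i : Fin n, ∃ j : ℕ, ∃ hj : j + 1 < n,
      d = zdist (L i ⟨j, Nat.lt_of_succ_lt hj⟩) (L i ⟨j + 1, hj⟩)) ∨
    (∃ j : Fin n, ∃ i : ℕ, ∃ hi : i + 1 < n,
      d = zdist (L ⟨i, Nat.lt_of_succ_lt hi⟩ j) (L ⟨i + 1, hi⟩ j)) }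

/-- `L` is circulant: each row is the cyclic right-shift of the previous one. -/
def IsCirculant (n : ℕ) [NeZero n] (L : Fin n → Fin n → ZMod n) : Prop :=
  ∀ i j : Fin n, L (i + 1) j = L i (j - 1)

/-- `L` is back-circulant: each row is the cyclic left-shift of the previous one. -/
def IsBackCirculant (n : ℕ) [NeZero n] (L : Fin n → Fin n → ZMod n) : Prop :=
  ∀ i j : Fin n, L (i + 1) j = L i (j + 1)

/-- `L` is a row product: every row has the same difference row as the first row. -/
def IsRowProduct (n : ℕ) (L : Fin n → Fin n → ZMod n) : Prop :=
  ∀ i : Fin n, ∀ j : ℕ, ∀ hj : j + 1 < n,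
    L i ⟨j + 1, hj⟩ - L i ⟨j, Nat.lt_of_succ_lt hj⟩ =
    L ⟨0, by omega⟩ ⟨j + 1, hj⟩ - L ⟨0, by omega⟩ ⟨j, Nat.lt_of_succ_lt hj⟩

section helpers
variable {n : ℕ}

private lemma valCast [NeZero n] (x : ZMod n) : ((x.val : ℕ) : ZMod n) = x := by
  simp [ZMod.natCast_val, ZMod.cast_id]

private lemma toInt [NeZero n] {A B : ℤ} (h : ((A : ZMod n)) = (B : ZMod n)) :
    A % n = B % n := (ZMod.intCast_eq_intCast_iff' _ _ _).mp h

def inS (n c : ℕ) (x : ZMod n) : Prop :=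
  x = ((c-1 : ℕ) : ZMod n) ∨ x = ((c : ℕ) : ZMod n) ∨ x = ((c+1 : ℕ) : ZMod n)

private lemma inS_neg (c : ℕ) (hc : n = 2*c) (hc3 : 3 ≤ c) {x : ZMod n} (h : inS n c x) :
    inS n c (-x) := by
  have hn0 : ((n : ℕ) : ZMod n) = 0 := ZMod.natCast_self n
  rcases h with h | h | h <;> subst h
  · right; right
    have h2 : ((c-1 : ℕ) : ZMod n) + ((c+1:ℕ) : ZMod n) = ((n:ℕ) : ZMod n) := by
      rw [← Nat.cast_add]; congr 1; omega
    linear_combination -h2 - hn0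
  · right; left
    have h2 : ((c : ℕ) : ZMod n) + ((c:ℕ) : ZMod n) = ((n:ℕ) : ZMod n) := by
      rw [← Nat.cast_add]; congr 1; omega
    linear_combination -h2 - hn0
  · left
    have h2 : ((c+1 : ℕ) : ZMod n) + ((c-1:ℕ) : ZMod n) = ((n:ℕ) : ZMod n) := by
      rw [← Nat.cast_add]; congr 1; omega
    linear_combination -h2 - hn0

private lemma chainEq {α : Type*} (f : Fin n → α)
    (h : ∀ j : ℕ, ∀ hj : j + 1 < n, f ⟨j+1, hj⟩ = f ⟨j, Nat.lt_of_succ_lt hj⟩) :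
    ∀ j k : Fin n, f j = f k := by
  have key : ∀ m : ℕ, ∀ hm : m < n, f ⟨m, hm⟩ = f ⟨0, Nat.lt_of_le_of_lt (Nat.zero_le m) hm⟩ := by
    intro m
    induction m with
    | zero => intro hm; rfl
    | succ m ih => intro hm; rw [h m hm, ih (Nat.lt_of_succ_lt hm)]
  intro j k
  rw [show j = ⟨j.val, j.isLt⟩ from rfl, show k = ⟨k.val, k.isLt⟩ from rfl, key j.val j.isLt,
    key k.val k.isLt]

end helpers
section two
variable {n : ℕ}

/-- closure: values reachable by steps of (u - w) from a `u`-position carry `u`. -/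
private lemma close [NeZero n] {r s : Fin n → ZMod n} (hrs : Function.Surjective r)
    (hri : Function.Injective r) (hs : Function.Injective s) {u w : ZMod n} (huw : u ≠ w)
    (hε : ∀ j, s j = r j + u ∨ s j = r j + w) {j0 : Fin n} (h0 : s j0 = r j0 + u) :
    ∀ m : ℕ, ∀ k, r k = r j0 + m • (u - w) → s k = r k + u := by
  intro m
  induction m with
  | zero =>
    intro k hk
    simp only [zero_smul, add_zero] at hk
    rwa [hri hk]
  | succ m ih =>
    intro k hk
    obtain ⟨l, hl⟩ := hrs (r j0 + m • (u - w))
    have hsl := ih l hl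
    rcases hε k with h | h
    · exact h
    · exfalso
      have hsk : s k = s l := by
        rw [h, hsl, hk, hl, succ_nsmul]; ring
      have : k = l := hs hsk
      subst this
      rw [hl, succ_nsmul] at hk
      have : u - w = 0 := by
        have := add_left_cancel hk.symm
        linear_combination this
      exact huw (sub_eq_zero.mp this)

/-- if the two possible offsets differ by a unit (±1) then the offset is constant -/
private lemma constGap [NeZero n] {r s : Fin n → ZMod n} (hrs : Function.Surjective r)
    (hri : Function.Injective r) (hs : Function.Injective s) {u w : ZMod n} (huw : u ≠ w)
    (hgen : u - w = 1 ∨ u - w = -1) (hε : ∀ j, s j = r j + u ∨ s j = r j + w) :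
    (∀ j, s j = r j + u) ∨ (∀ j, s j = r j + w) := by
  by_cases h : ∃ j0, s j0 = r j0 + u
  · obtain ⟨j0, h0⟩ := h
    left
    intro k
    rcases hgen with hg | hg
    · refine close hrs hri hs huw hε h0 (r k - r j0).val k ?_
      rw [hg, nsmul_eq_mul, mul_one, valCast]; ring
    · refine close hrs hri hs huw hε h0 (r j0 - r k).val k ?_
      rw [hg, nsmul_eq_mul, mul_neg_one, valCast]; ring
  · right
    intro j
    rcases hε j with hj | hj
    · exact absurd ⟨j, hj⟩ h
    · exact hj
end two
section three
variable {n : ℕ}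

private lemma natEqOfEq {a b t : ℕ} (h : a = b + n * t) : ((a : ZMod n)) = (b : ZMod n) := by
  subst h; push_cast [ZMod.natCast_self]; ring

private lemma smallZero (hn6 : 6 ≤ n) {e : ℤ} (h : ((e : ZMod n)) = 0)
    (h1 : -5 ≤ e) (h2 : e ≤ 5) : e = 0 := by
  obtain ⟨t, ht⟩ := (ZMod.intCast_zmod_eq_zero_iff_dvd e n).mp h
  have h6 : (6:ℤ) ≤ (n:ℤ) := by exact_mod_cast hn6
  rcases lt_trichotomy t 0 with h'|h'|h'
  · nlinarith
  · simp [ht, h']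
  · nlinarith

private lemma two2 : ∀ p q z : ZMod 2, p ≠ q → z = p ∨ z = q := by decide

private lemma inS_elim {c : ℕ} {x : ZMod n} (h : inS n c x) :
    ∃ k : ℕ, (c-1) ≤ k ∧ k ≤ c+1 ∧ x = ((k:ℕ) : ZMod n) := by
  rcases h with h | h | h
  · exact ⟨c-1, le_refl _, by omega, h⟩
  · exact ⟨c, by omega, by omega, h⟩
  · exact ⟨c+1, by omega, le_refl _, h⟩

/-- Core lemma: two injective "valid" rows differing pointwise by ±1 differ by a constant. -/
private lemma pm1 {c : ℕ} (hn6 : 6 ≤ n) (hc : n = 2*c) {r s : Fin n → ZMod n}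
    (hri : Function.Injective r) (hsi : Function.Injective s)
    (hrd : ∀ j : ℕ, ∀ hj : j + 1 < n, inS n c (r ⟨j+1, hj⟩ - r ⟨j, Nat.lt_of_succ_lt hj⟩))
    (hsd : ∀ j : ℕ, ∀ hj : j + 1 < n, inS n c (s ⟨j+1, hj⟩ - s ⟨j, Nat.lt_of_succ_lt hj⟩))
    (hε : ∀ j, s j = r j + 1 ∨ s j = r j + (-1)) :
    (∀ j, s j = r j + 1) ∨ (∀ j, s j = r j + (-1)) := by
  have hnz : NeZero n := ⟨by omega⟩
  have hc3 : 3 ≤ c := by omega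
  have h2n : (2:ℕ) ∣ n := ⟨c, hc⟩
  set π : ZMod n →+* ZMod 2 := ZMod.castHom h2n (ZMod 2) with hπ
  have hrb : Function.Bijective r :=
    (Fintype.bijective_iff_injective_and_card r).mpr ⟨hri, by rw [Fintype.card_fin, ZMod.card]⟩
  have hrs : Function.Surjective r := hrb.2
  have h40 : ((4:ℕ) : ZMod n) ≠ 0 := by
    rw [Ne, ZMod.natCast_eq_zero_iff]
    intro h
    have := Nat.le_of_dvd (by norm_num) h
    omega
  have hne : (1 : ZMod n) ≠ -1 := by
    intro h
    have h20 : ((2:ℕ) : ZMod n) ≠ 0 := by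
      rw [Ne, ZMod.natCast_eq_zero_iff]
      intro h'
      have := Nat.le_of_dvd (by norm_num) h'
      omega
    apply h20; push_cast; linear_combination h
  have hpm : ∀ x : ZMod n, x + 1 ≠ x + (-1) := by
    intro x h
    exact hne (by linear_combination h)
  by_cases hcst : (∀ j, s j = r j + 1) ∨ (∀ j, s j = r j + (-1))
  · exact hcst
  exfalso
  push_neg at hcst
  obtain ⟨h1, h2⟩ := hcst
  obtain ⟨ja, hja'⟩ := h1
  obtain ⟨jb, hjb'⟩ := h2
  have hja : s ja = r ja + (-1) := (hε ja).resolve_left hja'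
  have hjb : s jb = r jb + 1 := (hε jb).resolve_right hjb'
  -- parity propagation of the `+1` property
  have par : ∀ j k : Fin n, π (r j) = π (r k) → s j = r j + 1 → s k = r k + 1 := by
    intro j k hp hj
    have hd0 : π (r k - r j) = 0 := by rw [map_sub, hp, sub_self]
    rw [← valCast (r k - r j), map_natCast] at hd0
    obtain ⟨m, hm⟩ := (ZMod.natCast_eq_zero_iff _ _).mp hd0
    refine close hrs hri hsi hne hε hj m k ?_
    have h2' : ((2*m : ℕ) : ZMod n) = r k - r j := by rw [← hm, valCast]
    have hsm : m • ((1:ZMod n) - (-1)) = r k - r j := by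
      rw [nsmul_eq_mul]; push_cast at h2' ⊢; linear_combination h2'
    rw [hsm]; ring
  have par' : ∀ j k : Fin n, π (r j) = π (r k) → s j = r j + (-1) → s k = r k + (-1) := by
    intro j k hp hj
    rcases hε k with h | h
    · exfalso
      have := par k j hp.symm h
      exact hpm (r j) (this.symm.trans hj)
    · exact h
  have hab : π (r jb) ≠ π (r ja) := by
    intro h
    have := par jb ja h hjb
    exact hpm (r ja) (this.symm.trans hja)
  -- the `+1` property is exactly a parity class
  have parEq : ∀ x : Fin n, (s x = r x + 1 ↔ π (r x) = π (r jb)) := by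
    intro x
    constructor
    · intro hx
      rcases two2 _ _ (π (r x)) hab with h | h
      · exact h
      · exfalso
        have := par' ja x h.symm hja
        exact hpm (r x) (hx.symm.trans this)
    · intro h
      exact par jb x h.symm hjb
  -- no-flip at a step is equivalent to equal parity of r-values
  have twoIff : ∀ p q B : ZMod 2, ((p = B) ↔ (q = B)) ↔ (p = q) := by decide
  have noflipIff : ∀ j : ℕ, ∀ hj : j + 1 < n,
      ((s ⟨j+1, hj⟩ = r ⟨j+1, hj⟩ + 1 ↔
        s ⟨j, Nat.lt_of_succ_lt hj⟩ = r ⟨j, Nat.lt_of_succ_lt hj⟩ + 1)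
        ↔ π (r ⟨j+1, hj⟩) = π (r ⟨j, Nat.lt_of_succ_lt hj⟩)) := by
    intro j hj
    rw [parEq ⟨j+1, hj⟩, parEq ⟨j, Nat.lt_of_succ_lt hj⟩]
    exact twoIff _ _ _
  -- there exists a flip between consecutive positions
  have hflip : ∃ j : ℕ, ∃ hj : j + 1 < n,
      ¬ (s ⟨j+1, hj⟩ = r ⟨j+1, hj⟩ + 1 ↔
        s ⟨j, Nat.lt_of_succ_lt hj⟩ = r ⟨j, Nat.lt_of_succ_lt hj⟩ + 1) := by
    by_contra hno
    push_neg at hno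
    have hchain := chainEq (α := Prop) (fun x => s x = r x + 1) (by
      intro j hj
      exact propext (hno j hj))
    have heq : (s jb = r jb + 1) = (s ja = r ja + 1) := hchain jb ja
    have hx : s ja = r ja + 1 := heq ▸ hjb
    exact hpm (r ja) (hx.symm.trans hja)
  obtain ⟨j, hj, hf⟩ := hflip
  set x0 : Fin n := ⟨j, Nat.lt_of_succ_lt hj⟩ with hx0
  set x1 : Fin n := ⟨j+1, hj⟩ with hx1
  obtain ⟨k, hk1, hk2, hkδ⟩ := inS_elim (hrd j hj)
  obtain ⟨k', hk1', hk2', hkδ'⟩ := inS_elim (hsd j hj)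
  -- at the flip, the parities differ, so k is odd
  have hpne : π (r x1) ≠ π (r x0) := fun h => hf ((noflipIff j hj).mpr h)
  have hkodd : ¬ (2 ∣ k) := by
    intro hdvd
    apply hpne
    have : π (r x1 - r x0) = 0 := by
      rw [hkδ, map_natCast]
      exact (ZMod.natCast_eq_zero_iff _ _).mpr hdvd
    rw [map_sub] at this
    linear_combination this
  -- the flip relation : δ' = δ + 2 or δ' = δ - 2
  have hrel : (((k' : ℤ) - k - 2 : ℤ) : ZMod n) = 0 ∨ (((k' : ℤ) - k + 2 : ℤ) : ZMod n) = 0 := by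
    rcases hε x0 with h0 | h0
    · -- s x0 = r x0 + 1, so flip means s x1 = r x1 - 1 : δ' = δ - 2
      right
      have h1' : s x1 = r x1 + (-1) := by
        rcases hε x1 with h | h
        · exact absurd ⟨fun _ => h0, fun _ => h⟩ hf
        · exact h
      push_cast
      linear_combination hkδ - hkδ' + h1' - h0
    · left
      have h1' : s x1 = r x1 + 1 := by
        rcases hε x1 with h | h
        · exact h
        · exact absurd (iff_of_false (fun hx => hpm (r x1) (hx.symm.trans h))
            (fun hx => hpm (r x0) (hx.symm.trans h0))) hf
      push_cast
      linear_combination hkδ - hkδ' + h1' - h0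
  have hkk' : (k' : ℤ) = k + 2 ∨ (k' : ℤ) = k - 2 := by
    rcases hrel with h | h
    · left
      have := smallZero hn6 h (by omega) (by omega)
      omega
    · right
      have := smallZero hn6 h (by omega) (by omega)
      omega
  rcases Nat.even_or_odd c with hcpar | hcpar
  · -- c even : build the invariant r x + s x and derive 4 = 0
    obtain ⟨c2, hc2⟩ := hcpar
    have claimT : ∀ j' : ℕ, ∀ hj' : j' + 1 < n,
        (fun x => r x + s x) ⟨j'+1, hj'⟩ = (fun x => r x + s x) ⟨j', Nat.lt_of_succ_lt hj'⟩ := by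
      intro a ha
      simp only
      set y0 : Fin n := ⟨a, Nat.lt_of_succ_lt ha⟩ with hy0
      set y1 : Fin n := ⟨a+1, ha⟩ with hy1
      obtain ⟨m, hm1, hm2, hmδ⟩ := inS_elim (hrd a ha)
      obtain ⟨m', hm1', hm2', hmδ'⟩ := inS_elim (hsd a ha)
      have hπδ : π (r y1) - π (r y0) = ((m:ℕ) : ZMod 2) := by
        rw [← map_sub, hmδ, map_natCast]
      by_cases hfa : (s y1 = r y1 + 1 ↔ s y0 = r y0 + 1)
      · -- no flip : parity equal forces m = c and the offsets agree
        have hp : π (r y1) = π (r y0) := (noflipIff a ha).mp hfa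
        have hmeven : 2 ∣ m := by
          have : ((m:ℕ) : ZMod 2) = 0 := by rw [← hπδ, hp, sub_self]
          exact (ZMod.natCast_eq_zero_iff _ _).mp this
        have hmc : m = c := by omega
        rw [hmc] at hmδ
        have hcc : (((c + c : ℕ)) : ZMod n) = ((0:ℕ) : ZMod n) :=
          natEqOfEq (a := c + c) (b := 0) (t := 1) (by omega)
        push_cast at hcc
        have hrel0 : s y1 - s y0 = r y1 - r y0 := by
          rcases hε y0 with h0 | h0
          · have h1' : s y1 = r y1 + 1 := hfa.mpr h0
            linear_combination h1' - h0
          · have h1' : s y1 = r y1 + (-1) := by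
              rcases hε y1 with h | h
              · exact absurd ((hfa.mp h).symm.trans h0) (hpm (r y0))
              · exact h
            linear_combination h1' - h0
        linear_combination hrel0 + 2*hmδ + hcc
      · -- flip at a
        have hpa : π (r y1) ≠ π (r y0) := fun h => hfa ((noflipIff a ha).mpr h)
        have hmodd : ¬ (2 ∣ m) := by
          intro hdvd
          apply hpa
          have : ((m:ℕ) : ZMod 2) = 0 := (ZMod.natCast_eq_zero_iff _ _).mpr hdvd
          rw [this] at hπδ
          linear_combination hπδ
        rcases hε y0 with h0 | h0
        · -- + to - : δ' = δ - 2, so m = c+1, m' = c-1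
          have h1' : s y1 = r y1 + (-1) := by
            rcases hε y1 with h | h
            · exact absurd ⟨fun _ => h0, fun _ => h⟩ hfa
            · exact h
          have hrelm : (((m' : ℤ) - m + 2 : ℤ) : ZMod n) = 0 := by
            push_cast
            linear_combination hmδ - hmδ' + h1' - h0
          have hm'm : (m' : ℤ) = m - 2 := by
            have := smallZero hn6 hrelm (by omega) (by omega)
            omega
          have hmv : m = c + 1 := by omega
          have hmv' : m' = c - 1 := by omega
          rw [hmv] at hmδ
          rw [hmv'] at hmδ'
          have hD : (((c+1) + (c-1) : ℕ) : ZMod n) = ((0:ℕ) : ZMod n) :=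
            natEqOfEq (a := (c+1) + (c-1)) (b := 0) (t := 1) (by omega)
          push_cast at hD hmδ hmδ' ⊢
          linear_combination hmδ + hmδ' + hD
        · -- - to + : δ' = δ + 2, so m = c-1, m' = c+1
          have h1' : s y1 = r y1 + 1 := by
            rcases hε y1 with h | h
            · exact h
            · exact absurd (iff_of_false (fun hx => hpm (r y1) (hx.symm.trans h))
                (fun hx => hpm (r y0) (hx.symm.trans h0))) hfa
          have hrelm : (((m' : ℤ) - m - 2 : ℤ) : ZMod n) = 0 := by
            push_cast
            linear_combination hmδ - hmδ' + h1' - h0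
          have hm'm : (m' : ℤ) = m + 2 := by
            have := smallZero hn6 hrelm (by omega) (by omega)
            omega
          have hmv : m = c - 1 := by omega
          have hmv' : m' = c + 1 := by omega
          rw [hmv] at hmδ
          rw [hmv'] at hmδ'
          have hD : (((c-1) + (c+1) : ℕ) : ZMod n) = ((0:ℕ) : ZMod n) :=
            natEqOfEq (a := (c-1) + (c+1)) (b := 0) (t := 1) (by omega)
          push_cast at hD hmδ hmδ' ⊢
          linear_combination hmδ + hmδ' + hD
    have hTall := chainEq (fun x => r x + s x) claimT
    obtain ⟨q, hq⟩ := hrs (r jb + ((2:ℕ) : ZMod n))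
    have hπq : π (r q) = π (r jb) := by
      rw [hq, map_add, map_natCast]
      have : ((2:ℕ) : ZMod 2) = 0 := by decide
      rw [this, add_zero]
    have hsq : s q = r q + 1 := (parEq q).mpr hπq
    have hT := hTall q jb
    apply h40
    push_cast
    linear_combination hT - hsq + hjb - 2*hq
  · -- c odd : k must equal c, but then k' = c ± 2 is out of range
    obtain ⟨c2, hc2⟩ := hcpar
    omega
end three
section four
variable {n : ℕ}

/-- Three consecutive rows: if the first vertical offset is constant, so is the second. -/
private lemma step3 {c : ℕ} (hn6 : 6 ≤ n) (hc : n = 2*c) {r0 r1 r2 : Fin n → ZMod n}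
    (h0i : Function.Injective r0) (h2i : Function.Injective r2)
    (hd0 : ∀ j : ℕ, ∀ hj : j + 1 < n, inS n c (r0 ⟨j+1, hj⟩ - r0 ⟨j, Nat.lt_of_succ_lt hj⟩))
    (hd2 : ∀ j : ℕ, ∀ hj : j + 1 < n, inS n c (r2 ⟨j+1, hj⟩ - r2 ⟨j, Nat.lt_of_succ_lt hj⟩))
    (hv0 : ∀ j, inS n c (r1 j - r0 j)) (hv1 : ∀ j, inS n c (r2 j - r1 j))
    (h02 : ∀ j, r2 j ≠ r0 j)
    (hconst : ∀ j k, r1 j - r0 j = r1 k - r0 k) :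
    ∀ j k, r2 j - r1 j = r2 k - r1 k := by
  have hnz : NeZero n := ⟨by omega⟩
  have hc3 : 3 ≤ c := by omega
  have h10 : ((1:ℕ) : ZMod n) ≠ 0 := by
    rw [Ne, ZMod.natCast_eq_zero_iff]
    intro h
    have := Nat.le_of_dvd (by norm_num) h
    omega
  have hone : (1 : ZMod n) ≠ 0 := by
    intro h; apply h10; push_cast; exact h
  have h0b : Function.Bijective r0 :=
    (Fintype.bijective_iff_injective_and_card r0).mpr ⟨h0i, by rw [Fintype.card_fin, ZMod.card]⟩
  obtain ⟨v, hvlo, hvhi, hveq⟩ := inS_elim (hv0 ⟨0, by omega⟩)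
  have hvall : ∀ j, r1 j - r0 j = ((v:ℕ) : ZMod n) := fun j =>
    (hconst j ⟨0, by omega⟩).trans hveq
  have finish : ∀ u w' : ZMod n,
      ((∀ j, r2 j = r0 j + u) ∨ (∀ j, r2 j = r0 j + w')) →
      ∀ j k, r2 j - r1 j = r2 k - r1 k := by
    rintro u w' (h | h) j k
    · linear_combination (h j) - (h k) + (hvall k) - (hvall j)
    · linear_combination (h j) - (h k) + (hvall k) - (hvall j)
  have hvcases : v = c - 1 ∨ v = c ∨ v = c + 1 := by omega
  rcases hvcases with hv | hv | hv
  · -- v = c-1 : offsets in {-1, -2}, gap 1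
    have hall : ∀ j, r2 j = r0 j + (-1) ∨ r2 j = r0 j + (-(2:ZMod n)) := by
      intro j
      have hva := hvall j
      rw [hv] at hva
      obtain ⟨w, hwlo, hwhi, hwδ⟩ := inS_elim (hv1 j)
      have hwcases : w = c - 1 ∨ w = c ∨ w = c + 1 := by omega
      rcases hwcases with hw | hw | hw <;> rw [hw] at hwδ
      · right
        have e1 : (((c-1) + (c-1) + 2 : ℕ) : ZMod n) = ((0:ℕ) : ZMod n) :=
          natEqOfEq (t := 1) (by omega)
        push_cast at e1 hva hwδ
        linear_combination hwδ + hva + e1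
      · left
        have e1 : (((c-1) + c + 1 : ℕ) : ZMod n) = ((0:ℕ) : ZMod n) :=
          natEqOfEq (t := 1) (by omega)
        push_cast at e1 hva hwδ
        linear_combination hwδ + hva + e1
      · exfalso
        apply h02 j
        have e1 : (((c+1) + (c-1) : ℕ) : ZMod n) = ((0:ℕ) : ZMod n) :=
          natEqOfEq (t := 1) (by omega)
        push_cast at e1 hva hwδ
        linear_combination hwδ + hva + e1
    refine finish _ _ (constGap h0b.2 h0i h2i ?_ ?_ hall)
    · intro h; apply hone; linear_combination h
    · left; ring
  · -- v = c : offsets in {1, -1}, use pm1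
    have hall : ∀ j, r2 j = r0 j + 1 ∨ r2 j = r0 j + (-1) := by
      intro j
      have hva := hvall j
      rw [hv] at hva
      obtain ⟨w, hwlo, hwhi, hwδ⟩ := inS_elim (hv1 j)
      have hwcases : w = c - 1 ∨ w = c ∨ w = c + 1 := by omega
      rcases hwcases with hw | hw | hw <;> rw [hw] at hwδ
      · right
        have e1 : (((c-1) + c + 1 : ℕ) : ZMod n) = ((0:ℕ) : ZMod n) :=
          natEqOfEq (t := 1) (by omega)
        push_cast at e1 hva hwδ
        linear_combination hwδ + hva + e1
      · exfalso
        apply h02 j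
        have e1 : ((c + c : ℕ) : ZMod n) = ((0:ℕ) : ZMod n) :=
          natEqOfEq (t := 1) (by omega)
        push_cast at e1 hva hwδ
        linear_combination hwδ + hva + e1
      · left
        have e1 : (((c+1) + c : ℕ) : ZMod n) = ((1:ℕ) : ZMod n) :=
          natEqOfEq (t := 1) (by omega)
        push_cast at e1 hva hwδ
        linear_combination hwδ + hva + e1
    exact finish _ _ (pm1 hn6 hc h0i h2i hd0 hd2 hall)
  · -- v = c+1 : offsets in {1, 2}, gap -1
    have hall : ∀ j, r2 j = r0 j + 1 ∨ r2 j = r0 j + (2:ZMod n) := by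
      intro j
      have hva := hvall j
      rw [hv] at hva
      obtain ⟨w, hwlo, hwhi, hwδ⟩ := inS_elim (hv1 j)
      have hwcases : w = c - 1 ∨ w = c ∨ w = c + 1 := by omega
      rcases hwcases with hw | hw | hw <;> rw [hw] at hwδ
      · exfalso
        apply h02 j
        have e1 : (((c-1) + (c+1) : ℕ) : ZMod n) = ((0:ℕ) : ZMod n) :=
          natEqOfEq (t := 1) (by omega)
        push_cast at e1 hva hwδ
        linear_combination hwδ + hva + e1
      · left
        have e1 : ((c + (c+1) : ℕ) : ZMod n) = ((1:ℕ) : ZMod n) :=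
          natEqOfEq (t := 1) (by omega)
        push_cast at e1 hva hwδ
        linear_combination hwδ + hva + e1
      · right
        have e1 : (((c+1) + (c+1) : ℕ) : ZMod n) = ((2:ℕ) : ZMod n) :=
          natEqOfEq (t := 1) (by omega)
        push_cast at e1 hva hwδ
        linear_combination hwδ + hva + e1
    refine finish _ _ (constGap h0b.2 h0i h2i ?_ ?_ hall)
    · intro h; apply hone; linear_combination -h
    · right; ring
end four
section five
variable {n : ℕ}

private lemma toS {c : ℕ} (hc : n = 2*c) (hc3 : 3 ≤ c) {a b : ZMod n} (hne : a ≠ b)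
    (hge : c - 1 ≤ zdist a b) : inS n c (b - a) := by
  have hnz : NeZero n := ⟨by omega⟩
  have hsub : b - a ≠ 0 := sub_ne_zero.mpr (Ne.symm hne)
  have hval : (a - b).val = n - (b - a).val := by
    rw [show a - b = -(b - a) by ring, ZMod.neg_val, if_neg hsub]
  unfold zdist at hge
  obtain ⟨h1', h2'⟩ := le_min_iff.mp hge
  have hlt : (b - a).val < n := ZMod.val_lt _
  have hv0 : (b - a).val ≠ 0 := fun h => hsub ((ZMod.val_eq_zero _).mp h)
  have hcases : (b-a).val = c - 1 ∨ (b-a).val = c ∨ (b-a).val = c+1 := by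
    rw [hval] at h1'; omega
  rcases hcases with h | h | h
  · left; rw [← valCast (b-a), h]
  · right; left; rw [← valCast (b-a), h]
  · right; right; rw [← valCast (b-a), h]

/-- difference-row equality implies constant vertical offset -/
private lemma bridgeA {a b : Fin n → ZMod n}
    (h : ∀ j : ℕ, ∀ hj : j + 1 < n,
      a ⟨j+1, hj⟩ - a ⟨j, Nat.lt_of_succ_lt hj⟩ = b ⟨j+1, hj⟩ - b ⟨j, Nat.lt_of_succ_lt hj⟩) :
    ∀ j k, b j - a j = b k - a k := by
  apply chainEq (fun x => b x - a x)
  intro j hj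
  linear_combination - h j hj

private lemma bridgeB {a b : Fin n → ZMod n} (h : ∀ j k, b j - a j = b k - a k) :
    ∀ j : ℕ, ∀ hj : j + 1 < n,
      a ⟨j+1, hj⟩ - a ⟨j, Nat.lt_of_succ_lt hj⟩ = b ⟨j+1, hj⟩ - b ⟨j, Nat.lt_of_succ_lt hj⟩ := by
  intro j hj
  linear_combination - h ⟨j+1, hj⟩ ⟨j, Nat.lt_of_succ_lt hj⟩
end five

theorem stmt17 (n : ℕ) (hn : 6 ≤ n) (he : Even n) (L : Fin n → Fin n → ZMod n)
    (hL : IsLatin n L) (hd : innerDist n L = n / 2 - 1)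
    (i : ℕ) (hi : i + 1 < n)
    (hsame : ∀ j : ℕ, ∀ hj : j + 1 < n,
      L ⟨i, Nat.lt_of_succ_lt hi⟩ ⟨j + 1, hj⟩ -
        L ⟨i, Nat.lt_of_succ_lt hi⟩ ⟨j, Nat.lt_of_succ_lt hj⟩ =
      L ⟨i + 1, hi⟩ ⟨j + 1, hj⟩ - L ⟨i + 1, hi⟩ ⟨j, Nat.lt_of_succ_lt hj⟩) :
    IsRowProduct n L := by
  obtain ⟨c, hcc⟩ := he
  have hc : n = 2 * c := by omega
  have hc3 : 3 ≤ c := by omega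
  have hc' : n / 2 = c := by omega
  rw [hc'] at hd
  have hnz : NeZero n := ⟨by omega⟩
  -- all adjacent diffs are at distance ≥ c - 1
  have hlow : ∀ d ∈ { d : ℕ |
      (∃ a : Fin n, ∃ j : ℕ, ∃ hj : j + 1 < n,
        d = zdist (L a ⟨j, Nat.lt_of_succ_lt hj⟩) (L a ⟨j + 1, hj⟩)) ∨
      (∃ j : Fin n, ∃ a : ℕ, ∃ ha : a + 1 < n,
        d = zdist (L ⟨a, Nat.lt_of_succ_lt ha⟩ j) (L ⟨a + 1, ha⟩ j)) }, c - 1 ≤ d := by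
    intro d hdm
    calc c - 1 = innerDist n L := hd.symm
    _ ≤ d := Nat.sInf_le hdm
  -- horizontal differences
  have hH : ∀ a : Fin n, ∀ j : ℕ, ∀ hj : j + 1 < n,
      inS n c (L a ⟨j+1, hj⟩ - L a ⟨j, Nat.lt_of_succ_lt hj⟩) := by
    intro a j hj
    refine toS hc hc3 ?_ (hlow _ (Or.inl ⟨a, j, hj, rfl⟩))
    intro h
    have := hL.1 a h
    simp [Fin.mk.injEq] at this
  -- vertical differences
  have hV : ∀ j : Fin n, ∀ a : ℕ, ∀ ha : a + 1 < n,
      inS n c (L ⟨a+1, ha⟩ j - L ⟨a, Nat.lt_of_succ_lt ha⟩ j) := by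
    intro j a ha
    refine toS hc hc3 ?_ (hlow _ (Or.inr ⟨j, a, ha, rfl⟩))
    intro h
    have := hL.2 j h
    simp [Fin.mk.injEq] at this
  -- column distinctness two rows apart
  have hcol : ∀ (a b : ℕ) (hha : a < n) (hhb : b < n), a ≠ b →
      ∀ j, L ⟨a, hha⟩ j ≠ L ⟨b, hhb⟩ j := by
    intro a b hha hhb hab j h
    have := hL.2 j h
    simp [Fin.mk.injEq] at this
    exact hab this
  -- the constant-offset property for the pair (k, k+1)
  set Q : ℕ → Prop := fun k => ∀ hk : k + 1 < n, ∀ j j' : Fin n,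
    L ⟨k+1, hk⟩ j - L ⟨k, Nat.lt_of_succ_lt hk⟩ j =
    L ⟨k+1, hk⟩ j' - L ⟨k, Nat.lt_of_succ_lt hk⟩ j' with hQ
  have hQi : Q i := fun hk => bridgeA (fun j hj => hsame j hj)
  -- forward propagation
  have fwd : ∀ k, Q k → Q (k+1) := by
    intro k hQk hk1
    have hk : k + 1 < n := by omega
    refine step3 (r1 := L ⟨k+1, hk⟩) hn hc (hL.1 ⟨k, by omega⟩) (hL.1 ⟨k+2, by omega⟩)
      (fun j hj => hH _ j hj) (fun j hj => hH _ j hj)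
      (fun j => hV j k (by omega)) (fun j => hV j (k+1) (by omega))
      (hcol _ _ _ _ (by omega)) (hQk hk)
  -- backward propagation
  have bwd : ∀ k, k + 2 < n → Q (k+1) → Q k := by
    intro k hk2 hQk hk
    have hstep := step3 (r1 := L ⟨k+1, by omega⟩) hn hc (hL.1 ⟨k+2, by omega⟩) (hL.1 ⟨k, by omega⟩)
      (fun j hj => hH _ j hj) (fun j hj => hH _ j hj)
      (fun j => by
        have hx := inS_neg c hc hc3 (hV j (k+1) (by omega))
        rwa [neg_sub] at hx)
      (fun j => by
        have hx := inS_neg c hc hc3 (hV j k (by omega))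
        rwa [neg_sub] at hx)
      (hcol _ _ _ _ (by omega))
      (fun j j' => by linear_combination hQk hk2 j' j)
    intro j j'
    linear_combination hstep j' j
  -- all pairs satisfy Q
  have hup : ∀ d : ℕ, Q (i + d) := by
    intro d
    induction d with
    | zero => exact hQi
    | succ d ih => exact fwd _ ih
  have hdown : ∀ d : ℕ, Q (i - d) := by
    intro d
    induction d with
    | zero => exact hQi
    | succ d ih =>
      by_cases hdi : d < i
      · have : i - d = (i - (d+1)) + 1 := by omega
        rw [this] at ih
        exact bwd _ (by omega) ih
      · have : i - (d+1) = i - d := by omega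
        rw [this]
        exact ih
  have hQall : ∀ k, Q k := by
    intro k
    by_cases hk : k ≤ i
    · have : k = i - (i - k) := by omega
      rw [this]; exact hdown _
    · have : k = i + (k - i) := by omega
      rw [this]; exact hup _
  -- conclude row product
  have key : ∀ m : ℕ, ∀ hm : m < n, ∀ j : ℕ, ∀ hj : j + 1 < n,
      L ⟨m, hm⟩ ⟨j+1, hj⟩ - L ⟨m, hm⟩ ⟨j, Nat.lt_of_succ_lt hj⟩ =
      L ⟨0, by omega⟩ ⟨j+1, hj⟩ - L ⟨0, by omega⟩ ⟨j, Nat.lt_of_succ_lt hj⟩ := by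
    intro m
    induction m with
    | zero => intro hm j hj; rfl
    | succ m ih =>
      intro hm j hj
      have h1 := bridgeB (a := L ⟨m, by omega⟩) (b := L ⟨m+1, hm⟩) (hQall m hm) j hj
      rw [← h1]
      exact ih (by omega) j hj
  intro i' j hj
  exact key i'.val i'.isLt j hj
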